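/- In the group ring ℤ[μ(ℂ)], for a prime p and integer k ≥ 1: Ψ_{p^k} · Ψ_{p^k} = ((p−2)/(p−1))·φ(p^k)·Ψ_{p^k} + φ(p^k)·Σ_{l=0}^{k−1} Ψ_{p^l}. (Note (p−2)/(p−1)·φ(p^k) = (p−2)p^{k−1} is an integer.) -/

import Mathlib

/-- The group `μ(ℂ)` of all complex roots of unity, as a subgroup of `ℂˣ`. -/
def muC : Subgroup ℂˣ where
  carrier := {x | ∃ n : ℕ, 0 < n ∧ x ^ n = 1}
  one_mem' := ⟨1, one_pos, one_pow 1⟩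
  mul_mem' := by
    rintro a b ⟨n, hn, ha⟩ ⟨m, hm, hb⟩
    refine ⟨n * m, Nat.mul_pos hn hm, ?_⟩
    rw [mul_pow, pow_mul, ha, one_pow, pow_mul', hb, one_pow, one_mul]
  inv_mem' := by
    rintro a ⟨n, hn, ha⟩
    exact ⟨n, hn, by rw [inv_pow, ha, inv_one]⟩

/-- The primitive `m`-th root of unity `e(1/m) = exp(2πi/m)` as a unit of `ℂ`. -/
noncomputable def zetaU (m : ℕ) : ℂˣ :=
  Units.mk0 (Complex.exp (2 * Real.pi * Complex.I / m)) (Complex.exp_ne_zero _)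

lemma zetaU_pow (m : ℕ) (hm : 0 < m) : zetaU m ^ m = 1 := by
  have hm' : (m : ℂ) ≠ 0 := Nat.cast_ne_zero.mpr hm.ne'
  ext
  simp only [zetaU, Units.val_pow_eq_pow_val, Units.val_mk0, Units.val_one]
  rw [← Complex.exp_nat_mul]
  have h : (m : ℂ) * (2 * Real.pi * Complex.I / m) = 2 * Real.pi * Complex.I := by
    field_simp
  rw [h, Complex.exp_two_pi_mul_I]

/-- `e(1/m)` as an element of the group `μ(ℂ)` of roots of unity (junk value `1` for
`m = 0`). -/
noncomputable def zetaG (m : ℕ) : muC :=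
  if h : 0 < m then ⟨zetaU m, m, h, zetaU_pow m h⟩ else 1

/-- `Λ_m ∈ ℤ[μ(ℂ)]`, the divisor of `t^m - 1`: the formal sum of all `m`-th roots of
unity. -/
noncomputable def Lam (m : ℕ) : MonoidAlgebra ℤ muC :=
  ∑ k ∈ Finset.range m, MonoidAlgebra.single (zetaG m ^ k) 1

/-- `Ψ_m ∈ ℤ[μ(ℂ)]`, the divisor of the cyclotomic polynomial `Φ_m`: the formal sum of
all primitive `m`-th roots of unity. -/
noncomputable def Psi (m : ℕ) : MonoidAlgebra ℤ muC :=
  ∑ k ∈ (Finset.range m).filter (fun k => Nat.Coprime k m),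
    MonoidAlgebra.single (zetaG m ^ k) 1


open Finset

lemma orderOf_zetaG {m : ℕ} (hm : 0 < m) : orderOf (zetaG m) = m := by
  rw [zetaG, dif_pos hm]
  refine (Subgroup.orderOf_mk _ _).trans ?_
  rw [← orderOf_units]
  exact ((Complex.isPrimitiveRoot_exp m (Nat.cast_ne_zero.mp
    (by exact_mod_cast hm.ne'))).eq_orderOf).symm

noncomputable def eG (N : ℕ) (x : ZMod N) : MonoidAlgebra ℤ muC :=
  MonoidAlgebra.single (zetaG N ^ x.val) 1

lemma zetaG_pow_congr {N : ℕ} (hN : 0 < N) {a b : ℕ} (h : a ≡ b [MOD N]) :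
    zetaG N ^ a = zetaG N ^ b := by
  rw [pow_eq_pow_iff_modEq, orderOf_zetaG hN]; exact h

lemma eG_natCast {N : ℕ} [NeZero N] (n : ℕ) :
    eG N (n : ZMod N) = MonoidAlgebra.single (zetaG N ^ n) 1 := by
  rw [eG, ZMod.val_natCast]
  congr 1
  exact zetaG_pow_congr (Nat.pos_of_ne_zero (NeZero.ne N)) (Nat.mod_mod_of_dvd n dvd_rfl ▸ (Nat.mod_modEq n N))

lemma eG_mul {N : ℕ} [NeZero N] (x y : ZMod N) : eG N x * eG N y = eG N (x + y) := by
  rw [eG, eG, eG, MonoidAlgebra.single_mul_single, one_mul, ← pow_add]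
  congr 1
  exact zetaG_pow_congr (Nat.pos_of_ne_zero (NeZero.ne N))
    (by rw [ZMod.val_add]; exact (Nat.mod_modEq _ N).symm)
lemma zetaG_pow_pow {p : ℕ} (hp : 0 < p) {l k : ℕ} (hl : l ≤ k) :
    zetaG (p ^ k) ^ p ^ (k - l) = zetaG (p ^ l) := by
  have h1 : 0 < p ^ k := pow_pos hp k
  have h2 : 0 < p ^ l := pow_pos hp l
  rw [zetaG, zetaG, dif_pos h1, dif_pos h2]
  refine Subtype.ext ?_
  refine Units.ext ?_
  push_cast [zetaU]
  simp only [Units.val_mk0]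
  rw [← Complex.exp_nat_mul]
  congr 1
  have hpC : ((p : ℂ)) ≠ 0 := Nat.cast_ne_zero.mpr hp.ne'
  have h3 : ((p : ℂ)) ^ (k - l) * ((p:ℂ)) ^ l = ((p:ℂ)) ^ k := by
    rw [← pow_add, Nat.sub_add_cancel hl]
  push_cast
  field_simp
  linear_combination h3
lemma Psi_eq_sum_units (N : ℕ) [NeZero N] :
    Psi N = ∑ r ∈ Finset.univ.filter (fun r : ZMod N => IsUnit r), eG N r := by
  have hN : 0 < N := Nat.pos_of_ne_zero (NeZero.ne N)
  rw [Psi]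
  refine Finset.sum_bij (fun n _ => (n : ZMod N)) ?_ ?_ ?_ ?_
  · intro a ha
    rw [Finset.mem_filter] at ha ⊢
    exact ⟨Finset.mem_univ _, (ZMod.isUnit_iff_coprime a N).mpr ha.2⟩
  · intro a ha b hb hab
    rw [Finset.mem_filter, Finset.mem_range] at ha hb
    rwa [ZMod.natCast_eq_natCast_iff', Nat.mod_eq_of_lt ha.1, Nat.mod_eq_of_lt hb.1] at hab
  · intro r hr
    rw [Finset.mem_filter] at hr
    refine ⟨r.val, ?_, ?_⟩
    · rw [Finset.mem_filter, Finset.mem_range]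
      refine ⟨ZMod.val_lt r, ?_⟩
      have := hr.2
      rw [← ZMod.natCast_rightInverse r] at this
      exact (ZMod.isUnit_iff_coprime r.val N).mp this
    · exact ZMod.natCast_rightInverse r
  · intro a ha
    rw [eG_natCast]
section Count
variable {p k : ℕ}

lemma pi_natCast (hp : p.Prime) (hk : 1 ≤ k) (n : ℕ) :
    ZMod.castHom (dvd_pow_self p (Nat.one_le_iff_ne_zero.mp hk)) (ZMod p) (n : ZMod (p ^ k))
      = (n : ZMod p) := map_natCast _ n

lemma pi_fiber_card [NeZero (p ^ k)] (hp : p.Prime) (hk : 1 ≤ k) (t : ZMod p) :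
    (Finset.univ.filter (fun x : ZMod (p ^ k) =>
      ZMod.castHom (dvd_pow_self p (Nat.one_le_iff_ne_zero.mp hk)) (ZMod p) x = t)).card
      = p ^ (k - 1) := by
  haveI : Fact p.Prime := ⟨hp⟩
  haveI : NeZero (p ^ k) := ⟨(pow_pos hp.pos k).ne'⟩
  set π := ZMod.castHom (dvd_pow_self p (Nat.one_le_iff_ne_zero.mp hk)) (ZMod p) with hπ
  have hπn : ∀ s : ZMod p, π ((s.val : ℕ) : ZMod (p ^ k)) = s := by
    intro s
    rw [pi_natCast hp hk, ZMod.natCast_rightInverse s]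
  have hconst : ∀ s : ZMod p,
      (Finset.univ.filter (fun x => π x = s)).card
        = (Finset.univ.filter (fun x => π x = 0)).card := by
    intro s
    refine Finset.card_bij (fun x _ => x - ((s.val : ℕ) : ZMod (p ^ k))) ?_ ?_ ?_
    · intro a ha
      rw [Finset.mem_filter] at ha ⊢
      rw [map_sub, ha.2, hπn s, sub_self]
      exact ⟨Finset.mem_univ _, rfl⟩
    · intro a _ b _ hab
      exact sub_left_injective hab
    · intro b hb
      rw [Finset.mem_filter] at hb
      refine ⟨b + ((s.val : ℕ) : ZMod (p ^ k)), ?_, by ring⟩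
      rw [Finset.mem_filter, map_add, hb.2, hπn s, zero_add]
      exact ⟨Finset.mem_univ _, rfl⟩
  have hsum : ∑ s : ZMod p, (Finset.univ.filter (fun x => π x = s)).card = p ^ k := by
    rw [← Finset.card_eq_sum_card_fiberwise (fun x _ => Finset.mem_univ (π x))]
    simp [Finset.card_univ, ZMod.card]
  have hsum2 : p * (Finset.univ.filter (fun x => π x = 0)).card = p ^ k := by
    calc p * (Finset.univ.filter (fun x => π x = 0)).card
        = ∑ _s : ZMod p, (Finset.univ.filter (fun x => π x = 0)).card := by
          rw [Finset.sum_const, Finset.card_univ, ZMod.card, smul_eq_mul]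
      _ = ∑ s : ZMod p, (Finset.univ.filter (fun x => π x = s)).card :=
          Finset.sum_congr rfl (fun s _ => (hconst s).symm)
      _ = p ^ k := hsum
  have : p * (Finset.univ.filter (fun x => π x = 0)).card = p * p ^ (k - 1) := by
    rw [hsum2, ← pow_succ']
    congr 1
    omega
  exact (hconst t).trans (Nat.eq_of_mul_eq_mul_left hp.pos this)

lemma isUnit_iff_pi (hp : p.Prime) (hk : 1 ≤ k) (x : ZMod (p ^ k)) :
    IsUnit x ↔
      ZMod.castHom (dvd_pow_self p (Nat.one_le_iff_ne_zero.mp hk)) (ZMod p) x ≠ 0 := by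
  haveI : Fact p.Prime := ⟨hp⟩
  haveI : NeZero (p ^ k) := ⟨(pow_pos hp.pos k).ne'⟩
  set π := ZMod.castHom (dvd_pow_self p (Nat.one_le_iff_ne_zero.mp hk)) (ZMod p) with hπ
  constructor
  · intro h h0
    have h1 : IsUnit (π x) := h.map π
    rw [h0, isUnit_zero_iff] at h1
    exact zero_ne_one h1
  · intro h
    rw [← ZMod.natCast_rightInverse x, ZMod.isUnit_iff_coprime]
    refine Nat.Coprime.pow_right _ (Nat.Coprime.symm ((Nat.Prime.coprime_iff_not_dvd hp).mpr ?_))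
    intro hd
    apply h
    rw [← ZMod.natCast_rightInverse x, pi_natCast hp hk,
      ZMod.natCast_eq_zero_iff]
    exact hd

end Count
section Count2
variable {p k : ℕ}

lemma count_pairs [NeZero (p ^ k)] (hp : p.Prime) (hk : 1 ≤ k) (r : ZMod (p ^ k)) :
    (((Finset.univ.filter (fun x : ZMod (p ^ k) => IsUnit x)) ×ˢ
        (Finset.univ.filter (fun x : ZMod (p ^ k) => IsUnit x))).filter
        (fun z => z.1 + z.2 = r)).card
      = if IsUnit r then (p - 2) * p ^ (k - 1) else (p - 1) * p ^ (k - 1) := by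
  haveI : Fact p.Prime := ⟨hp⟩
  set π := ZMod.castHom (dvd_pow_self p (Nat.one_le_iff_ne_zero.mp hk)) (ZMod p) with hπ
  have step1 : (((Finset.univ.filter (fun x : ZMod (p ^ k) => IsUnit x)) ×ˢ
        (Finset.univ.filter (fun x : ZMod (p ^ k) => IsUnit x))).filter
        (fun z => z.1 + z.2 = r)).card
      = (Finset.univ.filter (fun x : ZMod (p ^ k) => IsUnit x ∧ IsUnit (r - x))).card := by
    refine Finset.card_bij (fun z _ => z.1) ?_ ?_ ?_
    · intro z hz
      rw [Finset.mem_filter, Finset.mem_product, Finset.mem_filter, Finset.mem_filter] at hz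
      rw [Finset.mem_filter]
      refine ⟨Finset.mem_univ _, hz.1.1.2, ?_⟩
      have : r - z.1 = z.2 := by rw [← hz.2]; ring
      rw [this]; exact hz.1.2.2
    · intro a ha b hb hab
      rw [Finset.mem_filter] at ha hb
      ext
      · exact hab
      · have h1 : a.2 = r - a.1 := by rw [← ha.2]; ring
        have h2 : b.2 = r - b.1 := by rw [← hb.2]; ring
        rw [h1, h2, hab]
    · intro x hx
      rw [Finset.mem_filter] at hx
      refine ⟨(x, r - x), ?_, rfl⟩
      rw [Finset.mem_filter, Finset.mem_product, Finset.mem_filter, Finset.mem_filter]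
      exact ⟨⟨⟨Finset.mem_univ _, hx.2.1⟩, ⟨Finset.mem_univ _, hx.2.2⟩⟩, by ring⟩
  rw [step1]
  have hiff : ∀ x : ZMod (p ^ k), (IsUnit x ∧ IsUnit (r - x)) ↔
      π x ∈ Finset.univ.filter (fun t : ZMod p => t ≠ 0 ∧ t ≠ π r) := by
    intro x
    rw [Finset.mem_filter]
    constructor
    · rintro ⟨h1, h2⟩
      refine ⟨Finset.mem_univ _, (isUnit_iff_pi hp hk x).mp h1, ?_⟩
      have h3 := (isUnit_iff_pi hp hk (r - x)).mp h2
      rw [map_sub] at h3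
      intro he
      exact h3 (by rw [he, sub_self])
    · rintro ⟨-, h1, h2⟩
      refine ⟨(isUnit_iff_pi hp hk x).mpr h1, (isUnit_iff_pi hp hk (r - x)).mpr ?_⟩
      rw [map_sub, sub_ne_zero]
      exact fun he => h2 he.symm
  have step2 : (Finset.univ.filter (fun x : ZMod (p ^ k) => IsUnit x ∧ IsUnit (r - x))).card
      = (Finset.univ.filter (fun t : ZMod p => t ≠ 0 ∧ t ≠ π r)).card * p ^ (k - 1) := by
    rw [Finset.filter_congr (fun x _ => by rw [hiff x])]
    rw [← Finset.sum_card_fiberwise_eq_card_filter]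
    rw [Finset.sum_congr rfl (fun t _ => pi_fiber_card hp hk t), Finset.sum_const, smul_eq_mul]
  rw [step2]
  by_cases h0 : IsUnit r
  · rw [if_pos h0]
    have h1 : π r ≠ 0 := (isUnit_iff_pi hp hk r).mp h0
    have : Finset.univ.filter (fun t : ZMod p => t ≠ 0 ∧ t ≠ π r)
        = ((Finset.univ : Finset (ZMod p)).erase 0).erase (π r) := by
      ext t
      simp only [Finset.mem_filter, Finset.mem_erase, Finset.mem_univ, and_true, true_and]
      tauto
    rw [this, Finset.card_erase_of_mem (Finset.mem_erase.mpr ⟨h1, Finset.mem_univ _⟩),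
      Finset.card_erase_of_mem (Finset.mem_univ _), Finset.card_univ, ZMod.card]
    have h2 : p - 1 - 1 = p - 2 := by omega
    rw [h2]
  · rw [if_neg h0]
    have h1 : π r = 0 := by
      by_contra h
      exact h0 ((isUnit_iff_pi hp hk r).mpr h)
    have : Finset.univ.filter (fun t : ZMod p => t ≠ 0 ∧ t ≠ π r)
        = ((Finset.univ : Finset (ZMod p)).erase 0) := by
      ext t
      simp only [Finset.mem_filter, Finset.mem_erase, Finset.mem_univ, and_true, true_and, h1]
      tauto
    rw [this, Finset.card_erase_of_mem (Finset.mem_univ _), Finset.card_univ, ZMod.card]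

end Count2
section SumPsi
variable {p k : ℕ}

lemma Psi_prime_pow_eq [NeZero (p ^ k)] (hp : p.Prime) {l : ℕ} (hl : l ≤ k) :
    Psi (p ^ l) = ∑ j ∈ (Finset.range (p ^ l)).filter (fun j => Nat.Coprime j (p ^ l)),
      eG (p ^ k) ((p ^ (k - l) * j : ℕ) : ZMod (p ^ k)) := by
  rw [Psi]
  refine Finset.sum_congr rfl fun j hj => ?_
  rw [eG_natCast, pow_mul, zetaG_pow_pow hp.pos hl]

lemma val_lt_aux (hp : p.Prime) {l j : ℕ} (hl : l ≤ k) (hj : j < p ^ l) :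
    p ^ (k - l) * j < p ^ k := by
  calc p ^ (k - l) * j < p ^ (k - l) * p ^ l :=
        (Nat.mul_lt_mul_left (pow_pos hp.pos _)).mpr hj
    _ = p ^ k := by rw [← pow_add, Nat.sub_add_cancel hl]

lemma fact_aux (hp : p.Prime) {l j : ℕ} (hlk : l < k) (hj : j ∈ (Finset.range (p ^ l)).filter
    (fun j => Nat.Coprime j (p ^ l))) (hj0 : j ≠ 0) :
    (p ^ (k - l) * j).factorization p = k - l ∧ l ≠ 0 := by
  rw [Finset.mem_filter, Finset.mem_range] at hj
  have hl0 : l ≠ 0 := by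
    rintro rfl
    simp only [pow_zero, Nat.lt_one_iff] at hj
    exact hj0 hj.1
  have hco : Nat.Coprime j p := Nat.Coprime.coprime_dvd_right (dvd_pow_self p hl0) hj.2
  have hnd : ¬ p ∣ j := (Nat.Prime.coprime_iff_not_dvd hp).mp hco.symm
  refine ⟨?_, hl0⟩
  rw [Nat.factorization_mul (pow_ne_zero _ hp.pos.ne') hj0, Finsupp.add_apply,
    hp.factorization_pow, Finsupp.single_eq_same, Nat.factorization_eq_zero_of_not_dvd hnd]
  omega

lemma sum_psi [NeZero (p ^ k)] (hp : p.Prime) (hk : 1 ≤ k) :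
    ∑ l ∈ Finset.range k, Psi (p ^ l)
      = ∑ r ∈ Finset.univ.filter (fun r : ZMod (p ^ k) => ¬ IsUnit r), eG (p ^ k) r := by
  have h1 : ∑ l ∈ Finset.range k, Psi (p ^ l)
      = ∑ z ∈ (Finset.range k).sigma
          (fun l => (Finset.range (p ^ l)).filter (fun j => Nat.Coprime j (p ^ l))),
        eG (p ^ k) ((p ^ (k - z.1) * z.2 : ℕ) : ZMod (p ^ k)) := by
    rw [Finset.sum_sigma]
    exact Finset.sum_congr rfl fun l hl =>
      Psi_prime_pow_eq hp (Finset.mem_range.mp hl).le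
  rw [h1]
  refine Finset.sum_bij (fun z _ => ((p ^ (k - z.1) * z.2 : ℕ) : ZMod (p ^ k))) ?_ ?_ ?_ ?_
  · rintro ⟨l, j⟩ hz
    rw [Finset.mem_sigma, Finset.mem_range] at hz
    dsimp only at hz
    rw [Finset.mem_filter]
    refine ⟨Finset.mem_univ _, ?_⟩
    rw [ZMod.isUnit_iff_coprime]
    intro hc
    have hd : p ∣ Nat.gcd (p ^ (k - l) * j) (p ^ k) :=
      Nat.dvd_gcd (dvd_mul_of_dvd_left (dvd_pow_self p (by omega : k - l ≠ 0)) j)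
        (dvd_pow_self p (by omega : k ≠ 0))
    rw [Nat.Coprime] at hc
    rw [hc] at hd
    exact hp.one_lt.ne' (Nat.dvd_one.mp hd)
  · rintro ⟨l₁, j₁⟩ ha ⟨l₂, j₂⟩ hb hab
    rw [Finset.mem_sigma, Finset.mem_range] at ha hb
    dsimp only at ha hb hab
    have hlt1 : p ^ (k - l₁) * j₁ < p ^ k :=
      val_lt_aux hp ha.1.le (Finset.mem_range.mp (Finset.mem_filter.mp ha.2).1)
    have hlt2 : p ^ (k - l₂) * j₂ < p ^ k :=
      val_lt_aux hp hb.1.le (Finset.mem_range.mp (Finset.mem_filter.mp hb.2).1)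
    have hnat : p ^ (k - l₁) * j₁ = p ^ (k - l₂) * j₂ := by
      rwa [ZMod.natCast_eq_natCast_iff', Nat.mod_eq_of_lt hlt1, Nat.mod_eq_of_lt hlt2] at hab
    by_cases hj0 : j₁ = 0
    · subst hj0
      have hl1 : l₁ = 0 := by
        have hc := (Finset.mem_filter.mp ha.2).2
        rw [Nat.coprime_zero_left] at hc
        by_contra h
        exact hp.one_lt.ne' ((pow_eq_one_iff.mp hc).resolve_right h)
      have h2 : j₂ = 0 := by
        rcases Nat.mul_eq_zero.mp (hnat.symm.trans (mul_zero _)) with h | h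
        · exact absurd h (pow_ne_zero _ hp.pos.ne')
        · exact h
      have hl2 : l₂ = 0 := by
        have hc := (Finset.mem_filter.mp hb.2).2
        rw [h2, Nat.coprime_zero_left] at hc
        by_contra h
        exact hp.one_lt.ne' ((pow_eq_one_iff.mp hc).resolve_right h)
      subst hl1; subst hl2; subst h2; rfl
    · have hj20 : j₂ ≠ 0 := by
        intro h
        apply hj0
        rw [h, mul_zero] at hnat
        rcases Nat.mul_eq_zero.mp hnat with h' | h'
        · exact absurd h' (pow_ne_zero _ hp.pos.ne')
        · exact h'
      obtain ⟨hf1, hl10⟩ := fact_aux hp ha.1 ha.2 hj0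
      obtain ⟨hf2, hl20⟩ := fact_aux hp hb.1 hb.2 hj20
      have hll : l₁ = l₂ := by
        have := hf1.symm.trans ((congrArg (fun n => n.factorization p) hnat).trans hf2)
        have h1 := ha.1; have h2 := hb.1
        omega
      subst hll
      have hjj : j₁ = j₂ := Nat.eq_of_mul_eq_mul_left (pow_pos hp.pos _) hnat
      subst hjj
      rfl
  · intro r hr
    rw [Finset.mem_filter] at hr
    by_cases hn : r.val = 0
    · refine ⟨⟨0, 0⟩, ?_, ?_⟩
      · rw [Finset.mem_sigma, Finset.mem_range, Finset.mem_filter, Finset.mem_range]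
        dsimp only
        exact ⟨by omega, by norm_num, Nat.coprime_one_right 0⟩
      · dsimp only
        rw [mul_zero, Nat.cast_zero]
        have := ZMod.natCast_rightInverse (n := p ^ k) r
        rw [← this, hn, Nat.cast_zero]
    · set n := r.val with hnv
      have hpd : p ∣ n := by
        by_contra hnd
        apply hr.2
        rw [← ZMod.natCast_rightInverse r, ZMod.isUnit_iff_coprime]
        exact Nat.Coprime.pow_right _
          (Nat.Coprime.symm ((Nat.Prime.coprime_iff_not_dvd hp).mpr hnd))
      set v := n.factorization p with hv
      have hv1 : 1 ≤ v := hp.factorization_pos_of_dvd hn hpd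
      have hpv : p ^ v ∣ n := Nat.ordProj_dvd n p
      have hvk : v < k := by
        have h1 : p ^ v ≤ n := Nat.le_of_dvd (Nat.pos_of_ne_zero hn) hpv
        have h2 : n < p ^ k := hnv ▸ ZMod.val_lt r
        exact (Nat.pow_lt_pow_iff_right hp.one_lt).mp (lt_of_le_of_lt h1 h2)
      refine ⟨⟨k - v, n / p ^ v⟩, ?_, ?_⟩
      · rw [Finset.mem_sigma, Finset.mem_range, Finset.mem_filter, Finset.mem_range]
        dsimp only
        refine ⟨by omega, ?_, ?_⟩
        · rw [Nat.div_lt_iff_lt_mul (pow_pos hp.pos v), ← pow_add,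
            Nat.sub_add_cancel hvk.le]
          exact hnv ▸ ZMod.val_lt r
        · exact Nat.Coprime.pow_right _
            (Nat.Coprime.symm ((Nat.Prime.coprime_iff_not_dvd hp).mpr
              (Nat.not_dvd_ordCompl hp hn)))
      · dsimp only
        have hkl : k - (k - v) = v := by omega
        rw [hkl, Nat.mul_div_cancel' hpv]
        exact ZMod.natCast_rightInverse r
  · rintro ⟨l, j⟩ hz
    rfl

end SumPsi
/-- Equation (7.16): in `ℤ[μ(ℂ)]`, for a prime `p` and `k ≥ 1`,
`Ψ_{p^k} · Ψ_{p^k} = ((p-2)/(p-1))·φ(p^k)·Ψ_{p^k} + φ(p^k)·Σ_{l=0}^{k-1} Ψ_{p^l}`,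
where `((p-2)/(p-1))·φ(p^k) = (p-2)·p^{k-1}`. -/
theorem Psi_prime_pow_mul_self (p k : ℕ) (hp : p.Prime) (hk : 1 ≤ k) :
    Psi (p ^ k) * Psi (p ^ k)
      = (((p : ℤ) - 2) * (p : ℤ) ^ (k - 1)) • Psi (p ^ k)
        + (Nat.totient (p ^ k) : ℤ) • ∑ l ∈ Finset.range k, Psi (p ^ l) := by
  haveI : NeZero (p ^ k) := ⟨(pow_pos hp.pos k).ne'⟩
  have lhs1 : Psi (p ^ k) * Psi (p ^ k)
      = ∑ z ∈ (Finset.univ.filter (fun x : ZMod (p ^ k) => IsUnit x)) ×ˢ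
          (Finset.univ.filter (fun x : ZMod (p ^ k) => IsUnit x)),
        eG (p ^ k) (z.1 + z.2) := by
    rw [Psi_eq_sum_units, Finset.sum_mul_sum, ← Finset.sum_product']
    exact Finset.sum_congr rfl fun z _ => eG_mul z.1 z.2
  have lhs2 : Psi (p ^ k) * Psi (p ^ k)
      = ∑ r : ZMod (p ^ k),
          (((Finset.univ.filter (fun x : ZMod (p ^ k) => IsUnit x)) ×ˢ
            (Finset.univ.filter (fun x : ZMod (p ^ k) => IsUnit x))).filter
            (fun z => z.1 + z.2 = r)).card • eG (p ^ k) r := by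
    rw [lhs1, ← Finset.sum_fiberwise_of_maps_to'
      (g := fun z : ZMod (p ^ k) × ZMod (p ^ k) => z.1 + z.2)
      (fun z _ => Finset.mem_univ _) (eG (p ^ k))]
    exact Finset.sum_congr rfl fun r _ => Finset.sum_const _
  rw [lhs2, ← Finset.sum_filter_add_sum_filter_not Finset.univ
    (fun r : ZMod (p ^ k) => IsUnit r)]
  have part1 : ∑ r ∈ Finset.univ.filter (fun r : ZMod (p ^ k) => IsUnit r),
      (((Finset.univ.filter (fun x : ZMod (p ^ k) => IsUnit x)) ×ˢ
        (Finset.univ.filter (fun x : ZMod (p ^ k) => IsUnit x))).filter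
        (fun z => z.1 + z.2 = r)).card • eG (p ^ k) r
      = (((p : ℤ) - 2) * (p : ℤ) ^ (k - 1)) • Psi (p ^ k) := by
    rw [Psi_eq_sum_units, Finset.smul_sum]
    refine Finset.sum_congr rfl fun r hr => ?_
    rw [count_pairs hp hk r, if_pos (Finset.mem_filter.mp hr).2,
      ← Nat.cast_smul_eq_nsmul ℤ]
    congr 1
    push_cast [Nat.cast_sub hp.two_le]
    ring
  have part2 : ∑ r ∈ Finset.univ.filter (fun r : ZMod (p ^ k) => ¬ IsUnit r),
      (((Finset.univ.filter (fun x : ZMod (p ^ k) => IsUnit x)) ×ˢ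
        (Finset.univ.filter (fun x : ZMod (p ^ k) => IsUnit x))).filter
        (fun z => z.1 + z.2 = r)).card • eG (p ^ k) r
      = (Nat.totient (p ^ k) : ℤ) • ∑ l ∈ Finset.range k, Psi (p ^ l) := by
    rw [sum_psi hp hk, Finset.smul_sum]
    refine Finset.sum_congr rfl fun r hr => ?_
    rw [count_pairs hp hk r, if_neg (Finset.mem_filter.mp hr).2,
      ← Nat.cast_smul_eq_nsmul ℤ]
    congr 1
    rw [Nat.totient_prime_pow hp hk]
    push_cast [Nat.cast_sub hp.one_le]
    ring
  rw [part1, part2]
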